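/- For every ξ = (ξ₁, ξ₂) ∈ ℝ² \ {0} and every κ ∈ ℝ, the pair of vectors η_±(ξ) := -(i/2)ξ ± √(-κ + |ξ|²/4) · ξ^⊥/|ξ| in ℂ² (where ξ^⊥ is the counterclockwise rotation of ξ by π/2) satisfies η₊ + η₋ = -iξ and η₊·η₊ = η₋·η₋ = -κ. Consequently, the plane wave factorizes as e^{-iξ·x} = e^{η₊·x} e^{η₋·x} for all x ∈ ℝ², and each factor e^{η±·x} is a solution of (-Δ - κ)u = 0 on ℝ². -/

import Mathlib

open Complex

lemma hd1 (a b : ℂ) (x : ℝ) :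
    HasDerivAt (fun t : ℝ => Complex.exp (a * t + b)) (a * Complex.exp (a * x + b)) x := by
  have h0 : HasDerivAt (fun z : ℂ => a * z + b) a ((x : ℝ) : ℂ) := by
    simpa using ((hasDerivAt_id ((x : ℝ) : ℂ)).const_mul a).add_const b
  simpa [mul_comm] using h0.cexp.comp_ofReal

lemma hd2 (a b : ℂ) (x : ℝ) :
    deriv (fun s : ℝ => deriv (fun t : ℝ => Complex.exp (a * t + b)) s) x
      = a ^ 2 * Complex.exp (a * x + b) := by
  have h1 : (fun s : ℝ => deriv (fun t : ℝ => Complex.exp (a * t + b)) s)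
      = fun s : ℝ => a * Complex.exp (a * s + b) := funext fun s => (hd1 a b s).deriv
  rw [h1]
  have := ((hd1 a b x).const_mul a).deriv
  rw [this]; ring

/-- the vectors `η₊, η₋` sum to `-iξ`, have bilinear square `-κ`, factor the
plane wave `e^{-iξ·x} = e^{η₊·x} e^{η₋·x}`, and each factor solves `(-Δ - κ)u = 0` on `ℝ²`. -/
theorem stmt2 (ξ₁ ξ₂ κ : ℝ) (hξ : ¬(ξ₁ = 0 ∧ ξ₂ = 0)) :
    let nξ : ℝ := Real.sqrt (ξ₁ ^ 2 + ξ₂ ^ 2)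
    let c : ℂ := ((-κ + (ξ₁ ^ 2 + ξ₂ ^ 2) / 4 : ℝ) : ℂ) ^ (1/2 : ℂ)
    let ηp : ℂ × ℂ := (-(Complex.I / 2) * ξ₁ + c * (-ξ₂ / nξ : ℝ),
                       -(Complex.I / 2) * ξ₂ + c * (ξ₁ / nξ : ℝ))
    let ηm : ℂ × ℂ := (-(Complex.I / 2) * ξ₁ - c * (-ξ₂ / nξ : ℝ),
                       -(Complex.I / 2) * ξ₂ - c * (ξ₁ / nξ : ℝ))
    (ηp.1 + ηm.1 = -Complex.I * ξ₁ ∧ ηp.2 + ηm.2 = -Complex.I * ξ₂) ∧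
    (ηp.1 ^ 2 + ηp.2 ^ 2 = -κ ∧ ηm.1 ^ 2 + ηm.2 ^ 2 = -κ) ∧
    (∀ x₁ x₂ : ℝ, Complex.exp (-(Complex.I * (ξ₁ * x₁ + ξ₂ * x₂))) =
        Complex.exp (ηp.1 * x₁ + ηp.2 * x₂) * Complex.exp (ηm.1 * x₁ + ηm.2 * x₂)) ∧
    (∀ η : ℂ × ℂ, η = ηp ∨ η = ηm → ∀ x₁ x₂ : ℝ,
        deriv (fun s : ℝ => deriv (fun t : ℝ => Complex.exp (η.1 * t + η.2 * x₂)) s) x₁ +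
          deriv (fun s : ℝ => deriv (fun t : ℝ => Complex.exp (η.1 * x₁ + η.2 * t)) s) x₂ =
        -κ * Complex.exp (η.1 * x₁ + η.2 * x₂)) := by
  intro nξ c ηp ηm
  have hpos : 0 < ξ₁ ^ 2 + ξ₂ ^ 2 := by
    rcases not_and_or.mp hξ with h | h
    · positivity
    · positivity
  have hn : (nξ : ℝ) ^ 2 = ξ₁ ^ 2 + ξ₂ ^ 2 := Real.sq_sqrt hpos.le
  have hnne : (nξ : ℂ) ≠ 0 := by
    simp only [ne_eq, Complex.ofReal_eq_zero]
    exact (Real.sqrt_pos.mpr hpos).ne'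
  have hc : c * c = ((-κ + (ξ₁ ^ 2 + ξ₂ ^ 2) / 4 : ℝ) : ℂ) := by
    set z : ℂ := ((-κ + (ξ₁ ^ 2 + ξ₂ ^ 2) / 4 : ℝ) : ℂ) with hz
    by_cases h : z = 0
    · simp [c, ← hz, h, Complex.zero_cpow (by norm_num : (1/2 : ℂ) ≠ 0)]
    · have : c * c = z ^ ((1/2 : ℂ) + (1/2 : ℂ)) := (Complex.cpow_add _ _ h).symm
      rw [this]; norm_num
  have hnC : (nξ : ℂ) * (nξ : ℂ) = (ξ₁ : ℂ) ^ 2 + (ξ₂ : ℂ) ^ 2 := by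
    rw [← sq]; exact_mod_cast congrArg (fun r : ℝ => (r : ℂ)) hn
  have hz : (ξ₁ : ℂ) ^ 2 + (ξ₂ : ℂ) ^ 2 ≠ 0 := by rw [← hnC]; exact mul_ne_zero hnne hnne
  have hsq : ∀ s : ℂ, s = 1 ∨ s = -1 →
      (-(Complex.I / 2) * ξ₁ + s * c * (-ξ₂ / nξ : ℝ)) ^ 2 +
      (-(Complex.I / 2) * ξ₂ + s * c * (ξ₁ / nξ : ℝ)) ^ 2 = -κ := by
    intro s hs
    have hs2 : s ^ 2 = 1 := by rcases hs with h | h <;> simp [h]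
    have hA : (((-ξ₂ / nξ : ℝ)) : ℂ) = -(ξ₂ : ℂ) / nξ := by push_cast; ring
    have hB : (((ξ₁ / nξ : ℝ)) : ℂ) = (ξ₁ : ℂ) / nξ := by push_cast; ring
    rw [hA, hB]
    have key : ∀ a u : ℂ,
        (a * ξ₁ + s * u * (-(ξ₂ : ℂ) / nξ)) ^ 2 + (a * ξ₂ + s * u * ((ξ₁ : ℂ) / nξ)) ^ 2
          = a ^ 2 * ((ξ₁ : ℂ) ^ 2 + (ξ₂ : ℂ) ^ 2) +
            s ^ 2 * (u * u) * (((ξ₁ : ℂ) ^ 2 + (ξ₂ : ℂ) ^ 2) / ((nξ : ℂ) * nξ)) := by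
      intro a u; field_simp; ring
    have h1 : -(Complex.I / 2) * (ξ₁ : ℂ) + s * c * (-(ξ₂ : ℂ) / nξ)
        = -(Complex.I / 2) * ξ₁ + s * c * (-(ξ₂ : ℂ) / nξ) := rfl
    calc (-(Complex.I / 2) * ξ₁ + s * c * (-(ξ₂ : ℂ) / nξ)) ^ 2 +
          (-(Complex.I / 2) * ξ₂ + s * c * ((ξ₁ : ℂ) / nξ)) ^ 2
        = (-(Complex.I / 2)) ^ 2 * ((ξ₁ : ℂ) ^ 2 + (ξ₂ : ℂ) ^ 2) +
            s ^ 2 * (c * c) * (((ξ₁ : ℂ) ^ 2 + (ξ₂ : ℂ) ^ 2) / ((nξ : ℂ) * nξ)) :=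
          key (-(Complex.I / 2)) c
      _ = -κ := by
          rw [hs2, hc, hnC, div_self hz]
          push_cast
          linear_combination (((ξ₁ : ℂ) ^ 2 + (ξ₂ : ℂ) ^ 2) / 4) * Complex.I_sq
  refine ⟨⟨?_, ?_⟩, ?_, ?_, ?_⟩
  · show _ + _ = _; push_cast; ring
  · show _ + _ = _; push_cast; ring
  · constructor
    · simpa [ηp] using hsq 1 (Or.inl rfl)
    · have := hsq (-1) (Or.inr rfl)
      show (-(Complex.I / 2) * ξ₁ - c * (-ξ₂ / nξ : ℝ)) ^ 2 +
          (-(Complex.I / 2) * ξ₂ - c * (ξ₁ / nξ : ℝ)) ^ 2 = -κ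
      convert this using 2 <;> ring
  · intro x₁ x₂
    rw [← Complex.exp_add]
    congr 1
    show -(Complex.I * (ξ₁ * x₁ + ξ₂ * x₂)) =
      (-(Complex.I / 2) * ξ₁ + c * (-ξ₂ / nξ : ℝ)) * x₁ +
        (-(Complex.I / 2) * ξ₂ + c * (ξ₁ / nξ : ℝ)) * x₂ +
      ((-(Complex.I / 2) * ξ₁ - c * (-ξ₂ / nξ : ℝ)) * x₁ +
        (-(Complex.I / 2) * ξ₂ - c * (ξ₁ / nξ : ℝ)) * x₂)
    push_cast; ring
  · intro η hη x₁ x₂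
    have h2 : η.1 ^ 2 + η.2 ^ 2 = -κ := by
      rcases hη with h | h <;> rw [h]
      · simpa [ηp] using hsq 1 (Or.inl rfl)
      · have := hsq (-1) (Or.inr rfl)
        show (-(Complex.I / 2) * ξ₁ - c * (-ξ₂ / nξ : ℝ)) ^ 2 +
            (-(Complex.I / 2) * ξ₂ - c * (ξ₁ / nξ : ℝ)) ^ 2 = -κ
        convert this using 2 <;> ring
    have e1 := hd2 η.1 (η.2 * x₂) x₁
    have e2 : deriv (fun s : ℝ => deriv (fun t : ℝ => Complex.exp (η.1 * x₁ + η.2 * t)) s) x₂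
        = η.2 ^ 2 * Complex.exp (η.2 * x₂ + η.1 * x₁) := by
      have heq : (fun t : ℝ => Complex.exp (η.1 * x₁ + η.2 * t))
          = fun t : ℝ => Complex.exp (η.2 * t + η.1 * x₁) := by
        funext t; rw [add_comm]
      rw [heq]; exact hd2 η.2 (η.1 * x₁) x₂
    rw [e1, e2, add_comm (η.2 * (x₂ : ℂ))]
    rw [← add_mul, h2]
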